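/- Let (P,≻,q) be a problem, let N ⊆ I, and let (ℓ_i)_{i∈I} and (k_i)_{i∈I} be vectors of natural numbers with k_i ≥ ℓ_i > 1 for all i. Let μ = GS(P^ℓ̄_N, P^k̄_{-N}, ≻, q), the deferred acceptance outcome when each student i ∈ N reports the truncation P_i^{ℓ_i} and each student i ∉ N reports the truncation P_i^{k_i}. Then every blocking student for μ under the true problem (P,≻,q) is unmatched under μ (i.e., μ(i) = ∅). -/

import Mathlib

/-!
School choice framework following Bonkoungou–Nesterov,
"Reforms meet fairness concerns in school and college admissions".

Students `I` and schools `S` are finite types with `|I| > |S|`.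
A strict preference relation of a student over `S ∪ {∅}` is represented by a list
of `Option S` containing every element exactly once (earlier = more preferred);
`none` is the outside option.  A strict priority order of a school is a list of
`I` containing every student exactly once (earlier = higher priority).
-/

namespace SchoolChoice

variable {I S : Type*} [Fintype I] [DecidableEq I] [Fintype S] [DecidableEq S]

/-- `p` is a strict preference relation on `S ∪ {∅}`: a ranking list containing every
element of `Option S` exactly once. -/
def ValidPref (p : List (Option S)) : Prop := p.Nodup ∧ ∀ x : Option S, x ∈ p

/-- `pr` is a strict priority order: a ranking list containing every student exactly once. -/
def ValidPrio (pr : List I) : Prop := pr.Nodup ∧ ∀ i : I, i ∈ pr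

/-- `a` is strictly preferred to `b` under the preference relation `p`. -/
def prefLt (p : List (Option S)) (a b : Option S) : Prop := p.idxOf a < p.idxOf b

/-- `i` has strictly higher priority than `j` under the priority order `pr`. -/
def prioLt (pr : List I) (i j : I) : Prop := pr.idxOf i < pr.idxOf j

instance (p : List (Option S)) (a b : Option S) : Decidable (prefLt p a b) :=
  inferInstanceAs (Decidable (_ < _))

instance (pr : List I) (i j : I) : Decidable (prioLt pr i j) :=
  inferInstanceAs (Decidable (_ < _))

/-- The acceptable schools of `p` (those preferred to the outside option), in preference
order. -/
def acceptables (p : List (Option S)) : List S := (p.takeWhile Option.isSome).filterMap id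

/-- The truncation of `p` after its `k`-th acceptable school: the preference relation
listing, in the same order, only the `min k _` most-preferred acceptable schools of `p`,
all other schools being unacceptable (kept below `none` in their original order). -/
def truncate (p : List (Option S)) (k : ℕ) : List (Option S) :=
  ((acceptables p).take k).map some ++
    none :: p.filter (fun x => decide (x ≠ none ∧ x ∉ ((acceptables p).take k).map some))

/-- `μ` is a matching: it respects the capacities `q`. -/
def IsMatching (q : S → ℕ) (μ : I → Option S) : Prop :=
  ∀ s : S, (Finset.univ.filter (fun i => μ i = some s)).card ≤ q s

/-- The pair `(i, s)` blocks `μ` under the problem `(P, prio, q)`. -/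
def Blocks (P : I → List (Option S)) (prio : S → List I) (q : S → ℕ)
    (μ : I → Option S) (i : I) (s : S) : Prop :=
  prefLt (P i) (some s) (μ i) ∧
    ((Finset.univ.filter (fun j => μ j = some s)).card < q s ∨
      ∃ j : I, μ j = some s ∧ prioLt (prio s) i j)

/-- `i` is a blocking student for `μ` under `(P, prio, q)`. -/
def BlockingStudent (P : I → List (Option S)) (prio : S → List I) (q : S → ℕ)
    (μ : I → Option S) (i : I) : Prop :=
  ∃ s : S, Blocks P prio q μ i s

/-- `μ` is individually rational under `P`. -/
def IndividuallyRational (P : I → List (Option S)) (μ : I → Option S) : Prop :=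
  ∀ i : I, ¬ prefLt (P i) none (μ i)

/-- `μ` is stable at `(P, prio, q)`. -/
def IsStable (P : I → List (Option S)) (prio : S → List I) (q : S → ℕ)
    (μ : I → Option S) : Prop :=
  IndividuallyRational P μ ∧ ∀ i : I, ¬ BlockingStudent P prio q μ i

/-- The number of blocking students for `μ` under `(P, prio, q)`. -/
noncomputable def numBlocking (P : I → List (Option S)) (prio : S → List I) (q : S → ℕ)
    (μ : I → Option S) : ℕ :=
  {i : I | BlockingStudent P prio q μ i}.ncard

/-! ### The Gale–Shapley student-proposing deferred acceptance mechanism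

The state `σ : I → ℕ` records, for each student, how many of her acceptable schools
have already rejected her; she currently applies to the `σ i`-th school on her list
(if any).  At each round every school tentatively keeps the `q s` highest-priority
students among its current applicants and rejects the rest, who move on. -/

/-- The school student `i` currently applies to. -/
def daTarget (P : I → List (Option S)) (σ : I → ℕ) (i : I) : Option S :=
  (acceptables (P i))[σ i]?

/-- The students tentatively held by school `s`: the `q s` highest-priority current
applicants. -/
def daHeld (P : I → List (Option S)) (prio : S → List I) (q : S → ℕ)
    (σ : I → ℕ) (s : S) : List I :=
  ((prio s).filter (fun i => decide (daTarget P σ i = some s))).take (q s)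

/-- One round of deferred acceptance: every rejected student moves to her next choice. -/
def daStep (P : I → List (Option S)) (prio : S → List I) (q : S → ℕ)
    (σ : I → ℕ) : I → ℕ := fun i =>
  match daTarget P σ i with
  | none => σ i
  | some s => if i ∈ daHeld P prio q σ s then σ i else σ i + 1

/-- The Gale–Shapley (student-proposing deferred acceptance) mechanism.  Iterating the
round map `|I| * |S| + 1` times is guaranteed to reach the terminal state. -/
def GS (P : I → List (Option S)) (prio : S → List I) (q : S → ℕ) : I → Option S :=
  fun i =>
    let σ := (daStep P prio q)^[Fintype.card I * Fintype.card S + 1] (fun _ => 0)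
    match daTarget P σ i with
    | none => none
    | some s => if i ∈ daHeld P prio q σ s then some s else none

/-- The constrained Gale–Shapley mechanism `GS^k`. -/
def GSk (k : ℕ) (P : I → List (Option S)) (prio : S → List I) (q : S → ℕ) : I → Option S :=
  GS (fun i => truncate (P i) k) prio q

/-! ### The Boston (immediate acceptance) mechanism -/

/-- Round `t` of the Boston mechanism: each not-yet-accepted student applies to her
`t`-th ranked acceptable school (0-indexed), and each school permanently accepts, up to
its remaining capacity, its highest-priority new applicants. -/
def bostonRound (P : I → List (Option S)) (prio : S → List I) (q : S → ℕ)
    (μ : I → Option S) (t : ℕ) : I → Option S := fun i =>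
  match μ i with
  | some s => some s
  | none =>
    match (acceptables (P i))[t]? with
    | none => none
    | some s =>
      if i ∈ ((prio s).filter
            (fun j => decide (μ j = none ∧ (acceptables (P j))[t]? = some s))).take
          (q s - (Finset.univ.filter (fun j => μ j = some s)).card)
      then some s else none

/-- The Boston (immediate acceptance) mechanism. -/
def Boston (P : I → List (Option S)) (prio : S → List I) (q : S → ℕ) : I → Option S :=
  (List.range (Fintype.card S)).foldl (bostonRound P prio q) (fun _ => none)

/-- The constrained Boston mechanism `β^k`. -/
def Bostonk (k : ℕ) (P : I → List (Option S)) (prio : S → List I) (q : S → ℕ) :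
    I → Option S :=
  Boston (fun i => truncate (P i) k) prio q

/-! ### The first-preference-first mechanism -/

/-- The adjusted priority profile: each first-preference-first school (member of `fpf`)
ranks students first by the rank they assign to it under `P` (counting the ranking of the
outside option as well), ties broken by the original priority; equal-preference schools
keep their original priority. -/
def fpfPrio (fpf : Finset S) (P : I → List (Option S)) (prio : S → List I) : S → List I :=
  fun s =>
    if s ∈ fpf then
      (List.range (Fintype.card S + 1)).flatMap
        (fun r => (prio s).filter (fun i => decide ((P i).idxOf (some s) = r)))
    else prio s

/-- The first-preference-first mechanism with set `fpf` of first-preference-first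
schools: Gale–Shapley run on the adjusted priorities. -/
def FPF (fpf : Finset S) (P : I → List (Option S)) (prio : S → List I) (q : S → ℕ) :
    I → Option S :=
  GS P (fpfPrio fpf P prio) q

/-- The constrained first-preference-first mechanism `FPF^k`. -/
def FPFk (fpf : Finset S) (k : ℕ) (P : I → List (Option S)) (prio : S → List I)
    (q : S → ℕ) : I → Option S :=
  FPF fpf (fun i => truncate (P i) k) prio q

/-! ### Manipulation and equilibrium notions -/

/-- Student `i` is a manipulating student of the mechanism `φ` (with priorities and
capacities fixed) at the true profile `P`. -/
def ManipulatingStudent (φ : (I → List (Option S)) → I → Option S)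
    (P : I → List (Option S)) (i : I) : Prop :=
  ∃ Q : List (Option S), ValidPref Q ∧
    prefLt (P i) (φ (Function.update P i Q) i) (φ P i)

/-- The mechanism `φ` is not manipulable at `P`. -/
def NotManipulable (φ : (I → List (Option S)) → I → Option S)
    (P : I → List (Option S)) : Prop :=
  ∀ i : I, ¬ ManipulatingStudent φ P i

/-- `P'` is a Nash equilibrium of the game `(φ, P)` in which the sophisticated students
are the members of `M` (who may misreport, and best respond) and all other (sincere)
students report truthfully. -/
def NashEq (φ : (I → List (Option S)) → I → Option S) (P : I → List (Option S))
    (M : Finset I) (P' : I → List (Option S)) : Prop :=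
  (∀ i, ValidPref (P' i)) ∧ (∀ i ∉ M, P' i = P i) ∧
    ∀ i ∈ M, ∀ Q : List (Option S), ValidPref Q →
      ¬ prefLt (P i) (φ (Function.update P' i Q) i) (φ P' i)

/-! ### Semi-sophisticated students -/

/-- Student `i` is guaranteed her first choice `s`: `s` is her most-preferred acceptable
school and `i` is among the `q s` highest-priority students at `s`. -/
def GuaranteedFirstChoice (P : I → List (Option S)) (prio : S → List I) (q : S → ℕ)
    (i : I) (s : S) : Prop :=
  (acceptables (P i)).head? = some s ∧ (prio s).idxOf i < q s

instance (P : I → List (Option S)) (prio : S → List I) (q : S → ℕ) (i : I) (s : S) :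
    Decidable (GuaranteedFirstChoice P prio q i s) :=
  inferInstanceAs (Decidable (_ ∧ _))

/-- School `s` is competitive: at least `q s` students are guaranteed their first
choice `s`. -/
def Competitive (P : I → List (Option S)) (prio : S → List I) (q : S → ℕ) (s : S) : Prop :=
  q s ≤ (Finset.univ.filter (fun i => GuaranteedFirstChoice P prio q i s)).card

instance (P : I → List (Option S)) (prio : S → List I) (q : S → ℕ) (s : S) :
    Decidable (Competitive P prio q s) :=
  inferInstanceAs (Decidable (_ ≤ _))

/-- `P'` is a Nash equilibrium of the game `(GS^ℓ, P)` with semi-sophisticated students: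
every student guaranteed her first choice reports truthfully; every other student reports
truthfully if she has at most `ℓ` acceptable schools or all her acceptable schools are
competitive, and otherwise lists as acceptable, in the order given by her true preference,
only her acceptable schools that are not competitive. -/
def SemiSophProfile (ℓ : ℕ) (P : I → List (Option S)) (prio : S → List I) (q : S → ℕ)
    (P' : I → List (Option S)) : Prop :=
  ∀ i : I,
    ((∃ s : S, GuaranteedFirstChoice P prio q i s) → P' i = P i) ∧
    (¬ (∃ s : S, GuaranteedFirstChoice P prio q i s) →
      (((acceptables (P i)).length ≤ ℓ ∨ ∀ s ∈ acceptables (P i), Competitive P prio q s) →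
          P' i = P i) ∧
      (¬ ((acceptables (P i)).length ≤ ℓ ∨
            ∀ s ∈ acceptables (P i), Competitive P prio q s) →
          acceptables (P' i) =
            (acceptables (P i)).filter (fun s => decide (¬ Competitive P prio q s))))


/-! ### Auxiliary lemmas for the proof of Statement 16 -/

section Aux

set_option linter.unusedSectionVars false

lemma aux_beq_eq : (Option.instBEq : BEq (Option S)) = instBEqOfDecidableEq :=
  lawful_beq_subsingleton _ _

attribute [-instance] Option.instBEq
attribute [-instance] instBEqOption

lemma aux_takeWhile_all {α : Type*} (p : α → Bool) (l1 l2 : List α) (b : α)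
    (h1 : ∀ x ∈ l1, p x = true) (hb : p b = false) :
    (l1 ++ b :: l2).takeWhile p = l1 := by
  induction l1 with
  | nil => simp [List.takeWhile_cons, hb]
  | cons a t ih =>
    simp only [List.cons_append, List.takeWhile_cons, h1 a (by simp), if_true]
    rw [ih (fun x hx => h1 x (by simp [hx]))]

lemma aux_map_some_acceptables (p : List (Option S)) :
    (acceptables p).map some = p.takeWhile Option.isSome := by
  induction p with
  | nil => rfl
  | cons a t ih =>
    cases a with
    | none => rfl
    | some s =>
      simp only [acceptables, List.takeWhile_cons] at ih ⊢
      simp only [Option.isSome_some, if_true, List.filterMap_cons, id]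
      rw [List.map_cons]; exact congrArg _ ih

lemma aux_acceptables_nodup {p : List (Option S)} (h : p.Nodup) : (acceptables p).Nodup := by
  have h1 : ((acceptables p).map some).Nodup := by
    rw [aux_map_some_acceptables]
    exact ((List.takeWhile_prefix _).sublist).nodup h
  exact (List.nodup_map_iff (Option.some_injective S)).mp h1

lemma aux_acceptables_truncate (p : List (Option S)) (k : ℕ) :
    acceptables (truncate p k) = (acceptables p).take k := by
  unfold truncate acceptables
  rw [aux_takeWhile_all _ _ _ _ ?_ rfl]
  · rw [List.filterMap_map]
    simp [Function.comp_def]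
  · intro x hx
    obtain ⟨y, _, rfl⟩ := List.mem_map.mp hx
    rfl

lemma aux_indexOf_map {α β : Type*} [DecidableEq α] [DecidableEq β] {f : α → β}
    (hf : Function.Injective f) (l : List α) (a : α) :
    (l.map f).idxOf (f a) = l.idxOf a := by
  induction l with
  | nil => rfl
  | cons b t ih =>
    rw [List.map_cons]
    by_cases h : b = a
    · subst h; rw [List.idxOf_cons_self, List.idxOf_cons_self]
    · rw [List.idxOf_cons_ne _ (fun e => h (hf e)), List.idxOf_cons_ne _ h, ih]

lemma aux_mem_of_indexOf_lt {α : Type*} [DecidableEq α] {l1 l2 : List α} {x : α}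
    (h : (l1 ++ l2).idxOf x < l1.length) : x ∈ l1 := by
  by_contra hnot
  rw [List.idxOf_append_of_notMem hnot] at h
  omega

lemma aux_mem_take_indexOf {α : Type*} [DecidableEq α] {a : α} {l : List α} {n : ℕ}
    (h : a ∈ l.take n) : l.idxOf a < n := by
  have h2 : l.idxOf a = (l.take n).idxOf a := by
    conv_lhs => rw [← List.take_append_drop n l]
    exact List.idxOf_append_of_mem h
  have h3 : (l.take n).idxOf a < (l.take n).length := List.idxOf_lt_length_iff.mpr h
  have h4 : (l.take n).length ≤ n := by
    rw [List.length_take]; omega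
  omega

lemma aux_ord {p : List (Option S)} (hnd : p.Nodup) (hmem : ∀ x : Option S, x ∈ p)
    {s s' : S} (hs' : s' ∈ acceptables p)
    (hlt : p.idxOf (some s) < p.idxOf (some s')) :
    s ∈ acceptables p ∧ (acceptables p).idxOf s < (acceptables p).idxOf s' := by
  have hinj : Function.Injective (some : S → Option S) := Option.some_injective S
  obtain ⟨r, hr⟩ := List.takeWhile_prefix (l := p) Option.isSome
  rw [← aux_map_some_acceptables p] at hr
  set A := acceptables p with hA
  rw [← hr] at hlt
  have hm' : some s' ∈ A.map some := List.mem_map_of_mem (f := some) hs'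
  have hidx' : (A.map some ++ r).idxOf (some s') = A.idxOf s' := by
    rw [List.idxOf_append_of_mem hm', aux_indexOf_map hinj]
  have hlt0 : A.idxOf s' < A.length := List.idxOf_lt_length_iff.mpr hs'
  have hlt' : (A.map some ++ r).idxOf (some s) < (A.map some).length := by
    rw [hidx'] at hlt
    simp only [List.length_map]
    omega
  have hm : some s ∈ A.map some := aux_mem_of_indexOf_lt hlt'
  have hidx : (A.map some ++ r).idxOf (some s) = A.idxOf s := by
    rw [List.idxOf_append_of_mem hm, aux_indexOf_map hinj]
  refine ⟨?_, ?_⟩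
  · obtain ⟨x, hx1, hx2⟩ := List.mem_map.mp hm
    rwa [← hinj hx2]
  · rw [hidx, hidx'] at hlt; exact hlt

/-- The number of applicants to `s` with higher priority than `i`. -/
def auxB (P : I → List (Option S)) (prio : S → List I) (σ : I → ℕ) (i : I) (s : S) : ℕ :=
  (((prio s).take ((prio s).idxOf i)).filter
    (fun j => decide (daTarget P σ j = some s))).length

lemma aux_reject {P : I → List (Option S)} {prio : S → List I} {q : S → ℕ}
    {σ : I → ℕ} {i : I} {s : S}
    (hi : i ∈ prio s) (ht : daTarget P σ i = some s)
    (hh : i ∉ daHeld P prio q σ s) : q s ≤ auxB P prio σ i s := by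
  by_contra hlt
  push_neg at hlt
  unfold auxB at hlt
  apply hh
  unfold daHeld
  have hixlt : (prio s).idxOf i < (prio s).length := List.idxOf_lt_length_iff.mpr hi
  have hsplit : prio s = (prio s).take ((prio s).idxOf i) ++
      i :: (prio s).drop ((prio s).idxOf i + 1) := by
    conv_lhs => rw [← List.take_append_drop ((prio s).idxOf i) (prio s)]
    rw [List.drop_eq_getElem_cons hixlt, List.getElem_idxOf hixlt]
  have hpi : decide (daTarget P σ i = some s) = true := decide_eq_true ht
  conv_lhs => rw [hsplit]
  rw [List.filter_append, List.filter_cons, hpi, if_pos rfl]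
  rw [List.take_append]
  set B := ((prio s).take ((prio s).idxOf i)).filter
    (fun j => decide (daTarget P σ j = some s)) with hB
  have hq : q s - B.length = (q s - B.length - 1) + 1 := by omega
  rw [hq, List.take_succ_cons]
  exact List.mem_append_right _ List.mem_cons_self

lemma aux_persist {P : I → List (Option S)} {prio : S → List I} {q : S → ℕ}
    {σ : I → ℕ} {i : I} {s : S} (hnd : (prio s).Nodup)
    (hC : q s ≤ auxB P prio σ i s) :
    q s ≤ auxB P prio (daStep P prio q σ) i s := by
  unfold auxB at hC ⊢
  set pred := fun j => decide (daTarget P σ j = some s) with hpred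
  set pred' := fun j => decide (daTarget P (daStep P prio q σ) j = some s) with hpred'
  set T := (prio s).take ((prio s).idxOf i) with hT
  set B := T.filter pred with hB
  have hheld : daHeld P prio q σ s = B.take (q s) := by
    unfold daHeld
    conv_lhs => rw [← List.take_append_drop ((prio s).idxOf i) (prio s)]
    rw [List.filter_append, List.take_append]
    have h0 : q s - B.length = 0 := by omega
    rw [← hT, ← hB, h0, List.take_zero, List.append_nil]
  have hHnd : (B.take (q s)).Nodup :=
    (((List.take_sublist _ _).trans (List.filter_sublist.trans
      (List.take_sublist _ _)))).nodup hnd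
  have hHlen : (B.take (q s)).length = q s := by
    rw [List.length_take]; omega
  have hsub : ∀ j ∈ B.take (q s), j ∈ T.filter pred' := by
    intro j hj
    have hjB : j ∈ B := List.take_subset _ _ hj
    have hjT : j ∈ T := List.mem_of_mem_filter hjB
    have hjp : pred j = true := List.of_mem_filter hjB
    rw [hpred] at hjp
    simp only [decide_eq_true_eq] at hjp
    have hjH : j ∈ daHeld P prio q σ s := by rw [hheld]; exact hj
    have hstep : daStep P prio q σ j = σ j := by
      simp [daStep, hjp, hjH]
    have htgt : daTarget P (daStep P prio q σ) j = some s := by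
      unfold daTarget at hjp ⊢
      rw [hstep]; exact hjp
    refine List.mem_filter.mpr ⟨hjT, ?_⟩
    rw [hpred']
    simpa using htgt
  have h1 : (B.take (q s)).toFinset ⊆ (T.filter pred').toFinset := by
    intro j hj
    rw [List.mem_toFinset] at hj ⊢
    exact hsub j hj
  calc q s = (B.take (q s)).toFinset.card := by
        rw [List.toFinset_card_of_nodup hHnd, hHlen]
    _ ≤ (T.filter pred').toFinset.card := Finset.card_le_card h1
    _ ≤ (T.filter pred').length := List.toFinset_card_le _

lemma aux_step_cases (P : I → List (Option S)) (prio : S → List I) (q : S → ℕ)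
    (σ : I → ℕ) (i : I) :
    daStep P prio q σ i = σ i ∨
      (daStep P prio q σ i = σ i + 1 ∧
        ∃ s, daTarget P σ i = some s ∧ i ∉ daHeld P prio q σ s) := by
  cases ht : daTarget P σ i with
  | none => left; simp [daStep, ht]
  | some s =>
    by_cases hh : i ∈ daHeld P prio q σ s
    · left; simp [daStep, ht, hh]
    · right; exact ⟨by simp [daStep, ht, hh], s, rfl, hh⟩

lemma aux_invariant {P : I → List (Option S)} {prio : S → List I} {q : S → ℕ}
    (hprio : ∀ s, ValidPrio (prio s)) :
    ∀ (n : ℕ) (i : I) (s : S) (t : ℕ),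
      t < ((daStep P prio q)^[n] (fun _ => 0)) i →
      (acceptables (P i))[t]? = some s →
      q s ≤ auxB P prio ((daStep P prio q)^[n] (fun _ => 0)) i s := by
  intro n
  induction n with
  | zero => intro i s t ht _; simp at ht
  | succ n ih =>
    intro i s t ht hA
    rw [Function.iterate_succ_apply'] at ht ⊢
    set σ := (daStep P prio q)^[n] (fun _ => 0) with hσ
    by_cases hcase : t < σ i
    · exact aux_persist (hprio s).1 (ih i s t hcase hA)
    · rcases aux_step_cases P prio q σ i with h | ⟨h1, s', hs', hh⟩
      · rw [h] at ht; exact absurd ht hcase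
      · rw [h1] at ht
        have htt : t = σ i := by omega
        have hss : s' = s := by
          unfold daTarget at hs'
          rw [← htt] at hs'
          rw [hA] at hs'
          exact (Option.some_injective _ hs').symm
        subst hss
        exact aux_persist (hprio s').1 (aux_reject ((hprio s').2 i) hs' hh)

lemma aux_sigma_le {P : I → List (Option S)} {prio : S → List I} {q : S → ℕ} :
    ∀ (n : ℕ) (i : I), ((daStep P prio q)^[n] (fun _ => 0)) i ≤ (acceptables (P i)).length := by
  intro n
  induction n with
  | zero => intro i; simp
  | succ n ih =>
    intro i
    rw [Function.iterate_succ_apply']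
    set σ := (daStep P prio q)^[n] (fun _ => 0) with hσ
    rcases aux_step_cases P prio q σ i with h | ⟨h1, s, hs, _⟩
    · rw [h]; exact ih i
    · have hlt : σ i < (acceptables (P i)).length := by
        unfold daTarget at hs
        exact (List.getElem?_eq_some_iff.mp hs).1
      rw [h1]; omega

lemma aux_fixed {P : I → List (Option S)} {prio : S → List I} {q : S → ℕ}
    (hlen : ∀ i, (acceptables (P i)).length ≤ Fintype.card S) :
    daStep P prio q ((daStep P prio q)^[Fintype.card I * Fintype.card S + 1] (fun _ => 0)) =
      (daStep P prio q)^[Fintype.card I * Fintype.card S + 1] (fun _ => 0) := by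
  have key : ∀ n : ℕ,
      daStep P prio q ((daStep P prio q)^[n] (fun _ => 0)) =
        (daStep P prio q)^[n] (fun _ => 0) ∨
      n ≤ ∑ j : I, ((daStep P prio q)^[n] (fun _ => 0)) j := by
    intro n
    induction n with
    | zero => right; simp
    | succ n ih =>
      by_cases hfix : daStep P prio q ((daStep P prio q)^[n] (fun _ => 0)) =
          (daStep P prio q)^[n] (fun _ => 0)
      · left; rw [Function.iterate_succ_apply', hfix, hfix]
      · right
        rcases ih with h | h
        · exact absurd h hfix
        rw [Function.iterate_succ_apply']
        have hle : ∀ j : I, ((daStep P prio q)^[n] (fun _ => 0)) j ≤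
            daStep P prio q ((daStep P prio q)^[n] (fun _ => 0)) j := by
          intro j
          rcases aux_step_cases P prio q ((daStep P prio q)^[n] (fun _ => 0)) j with
            h2 | ⟨h2, _⟩ <;> omega
        have hex : ∃ j : I, ((daStep P prio q)^[n] (fun _ => 0)) j <
            daStep P prio q ((daStep P prio q)^[n] (fun _ => 0)) j := by
          by_contra hcon
          push_neg at hcon
          apply hfix
          funext j
          have h3 := hle j
          have h4 := hcon j
          omega
        obtain ⟨j, hj⟩ := hex
        have hsum := Finset.sum_lt_sum (fun j (_ : j ∈ Finset.univ) => hle j)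
          ⟨j, Finset.mem_univ j, hj⟩
        omega
  rcases key (Fintype.card I * Fintype.card S + 1) with h | h
  · exact h
  · exfalso
    have hb : ∑ j : I, ((daStep P prio q)^[Fintype.card I * Fintype.card S + 1]
        (fun _ => 0)) j ≤ ∑ _j : I, Fintype.card S :=
      Finset.sum_le_sum (fun j _ => le_trans (aux_sigma_le _ j) (hlen j))
    rw [Finset.sum_const, Finset.card_univ, smul_eq_mul] at hb
    omega

lemma aux_fixed_held {P : I → List (Option S)} {prio : S → List I} {q : S → ℕ}
    {σ : I → ℕ} (hfix : daStep P prio q σ = σ) {j : I} {s : S}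
    (ht : daTarget P σ j = some s) : j ∈ daHeld P prio q σ s := by
  by_contra hh
  have h1 : daStep P prio q σ j = σ j + 1 := by simp [daStep, ht, hh]
  have h2 : daStep P prio q σ j = σ j := congrFun hfix j
  omega

lemma aux_held_nodup {P : I → List (Option S)} {prio : S → List I} {q : S → ℕ}
    {σ : I → ℕ} {s : S} (hnd : (prio s).Nodup) : (daHeld P prio q σ s).Nodup := by
  unfold daHeld
  exact ((List.take_sublist _ _).trans List.filter_sublist).nodup hnd

lemma aux_held_structure {P : I → List (Option S)} {prio : S → List I} {q : S → ℕ}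
    {σ : I → ℕ} {i : I} {s : S}
    (hC : q s ≤ auxB P prio σ i s) :
    q s ≤ (daHeld P prio q σ s).length ∧
      (∀ j ∈ daHeld P prio q σ s, (prio s).idxOf j < (prio s).idxOf i) ∧
      (∀ j ∈ daHeld P prio q σ s, daTarget P σ j = some s) := by
  unfold auxB at hC
  unfold daHeld
  set pred := fun j => decide (daTarget P σ j = some s) with hpred
  set B := ((prio s).take ((prio s).idxOf i)).filter pred with hB
  have hsplit : (prio s).filter pred =
      B ++ ((prio s).drop ((prio s).idxOf i)).filter pred := by
    rw [hB, ← List.filter_append, List.take_append_drop]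
  rw [hsplit, List.take_append]
  have h0 : q s - B.length = 0 := by omega
  rw [h0, List.take_zero, List.append_nil]
  refine ⟨?_, ?_, ?_⟩
  · rw [List.length_take]; omega
  · intro j hj
    have hjB : j ∈ B := List.take_subset _ _ hj
    have hjT : j ∈ (prio s).take ((prio s).idxOf i) := List.mem_of_mem_filter hjB
    exact aux_mem_take_indexOf hjT
  · intro j hj
    have hjB : j ∈ B := List.take_subset _ _ hj
    have hjp : pred j = true := List.of_mem_filter hjB
    rw [hpred] at hjp
    simpa using hjp

end Aux

/-- Lemma 2: if each student in `N` reports the truncation of her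
preference after her `ℓᵢ`-th acceptable school and every other student the truncation
after her `kᵢ`-th acceptable school (with `kᵢ ≥ ℓᵢ > 1`), then every blocking student
for the resulting deferred acceptance matching under the true problem `(P,≻,q)` is
unmatched. -/
theorem blocking_student_unmatched_under_truncations
    {I S : Type*} [Fintype I] [DecidableEq I] [Fintype S] [DecidableEq S]
    (hIS : Fintype.card S < Fintype.card I)
    (P : I → List (Option S)) (prio : S → List I) (q : S → ℕ)
    (hP : ∀ i, ValidPref (P i)) (hprio : ∀ s, ValidPrio (prio s))
    (N : Finset I) (lv kv : I → ℕ)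
    (hl : ∀ i, 1 < lv i) (hlk : ∀ i, lv i ≤ kv i) :
    ∀ i : I,
      BlockingStudent P prio q
        (GS (fun j => truncate (P j) (if j ∈ N then lv j else kv j)) prio q) i →
      GS (fun j => truncate (P j) (if j ∈ N then lv j else kv j)) prio q i = none := by
  intro i hi
  set Q : I → List (Option S) :=
    fun j => truncate (P j) (if j ∈ N then lv j else kv j) with hQ
  by_cases hmu : GS Q prio q i = none
  · exact hmu
  exfalso
  set σ := (daStep Q prio q)^[Fintype.card I * Fintype.card S + 1]
    (fun _ => 0) with hσ
  have hGSeq : ∀ j, GS Q prio q j = (match daTarget Q σ j with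
      | none => none
      | some s => if j ∈ daHeld Q prio q σ s then some s else none) := fun j => rfl
  have hAQ : ∀ j, acceptables (Q j) =
      (acceptables (P j)).take (if j ∈ N then lv j else kv j) := by
    intro j
    simp only [hQ]
    exact aux_acceptables_truncate _ _
  have hAnd : ∀ j, (acceptables (Q j)).Nodup := by
    intro j
    rw [hAQ j]
    exact (List.take_sublist _ _).nodup (aux_acceptables_nodup (hP j).1)
  have hlen : ∀ j, (acceptables (Q j)).length ≤ Fintype.card S :=
    fun j => (hAnd j).length_le_card
  have hfix : daStep Q prio q σ = σ := by
    rw [hσ]; exact aux_fixed hlen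
  have hmatch : ∀ (j : I) (s1 : S),
      GS Q prio q j = some s1 ↔ daTarget Q σ j = some s1 := by
    intro j s1
    rw [hGSeq j]
    cases ht : daTarget Q σ j with
    | none => simp
    | some s2 =>
      by_cases hh : j ∈ daHeld Q prio q σ s2
      · simp [hh]
      · exact (hh (aux_fixed_held hfix ht)).elim
  obtain ⟨s0, hμi⟩ := Option.ne_none_iff_exists'.mp hmu
  have hT0 : daTarget Q σ i = some s0 := (hmatch i s0).mp hμi
  unfold BlockingStudent Blocks at hi
  obtain ⟨s, hpref, hblock⟩ := hi
  rw [hμi] at hpref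
  unfold prefLt at hpref
  rw [aux_beq_eq] at hpref
  unfold daTarget at hT0
  rw [hAQ i] at hT0
  set A := acceptables (P i) with hA
  set k := (if i ∈ N then lv i else kv i) with hk
  obtain ⟨hσlt, hs0⟩ := List.getElem?_eq_some_iff.mp hT0
  have hs0A' : s0 ∈ A.take k := hs0 ▸ List.getElem_mem hσlt
  have hs0A : s0 ∈ A := List.take_subset k A hs0A'
  obtain ⟨hsA, hord⟩ := aux_ord (hP i).1 (hP i).2 hs0A hpref
  have hA'nd : (A.take k).Nodup :=
    (List.take_sublist _ _).nodup (aux_acceptables_nodup (hP i).1)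
  have hidx0 : A.idxOf s0 = σ i := by
    have h1 : A.idxOf s0 = (A.take k).idxOf s0 := by
      conv_lhs => rw [← List.take_append_drop k A]
      exact List.idxOf_append_of_mem hs0A'
    rw [h1, ← hs0, List.Nodup.idxOf_getElem hA'nd]
  have hu : A.idxOf s < σ i := by rw [← hidx0]; exact hord
  have huA : A.idxOf s < A.length := List.idxOf_lt_length_iff.mpr hsA
  have hulen : A.idxOf s < (A.take k).length := by omega
  have hgets : (A.take k)[A.idxOf s]'hulen = s := by
    rw [List.getElem_take]
    exact List.getElem_idxOf huA
  have hAu : (acceptables (Q i))[A.idxOf s]? = some s := by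
    rw [hAQ i, ← hk, ← hA]
    exact List.getElem?_eq_some_iff.mpr ⟨hulen, hgets⟩
  have hC : q s ≤ auxB Q prio σ i s := by
    have hu' := hu
    rw [hσ] at hu'
    have := aux_invariant hprio (Fintype.card I * Fintype.card S + 1) i s
      (A.idxOf s) hu' hAu
    rw [← hσ] at this
    exact this
  obtain ⟨hlenH, hprioH, htgtH⟩ := aux_held_structure hC
  have hHset : ∀ j, GS Q prio q j = some s ↔ j ∈ daHeld Q prio q σ s := by
    intro j
    rw [hmatch j s]
    exact ⟨fun h => aux_fixed_held hfix h, fun h => htgtH j h⟩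
  rcases hblock with hcap | ⟨j, hj1, hj2⟩
  · have hsub : (daHeld Q prio q σ s).toFinset ⊆
        Finset.univ.filter (fun j => GS Q prio q j = some s) := by
      intro j hj
      simp only [Finset.mem_filter, Finset.mem_univ, true_and]
      exact (hHset j).mpr (List.mem_toFinset.mp hj)
    have hge : q s ≤ (Finset.univ.filter (fun j => GS Q prio q j = some s)).card := by
      calc q s ≤ (daHeld Q prio q σ s).length := hlenH
        _ = (daHeld Q prio q σ s).toFinset.card :=
          (List.toFinset_card_of_nodup (aux_held_nodup (hprio s).1)).symm
        _ ≤ _ := Finset.card_le_card hsub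
    omega
  · have hjH : j ∈ daHeld Q prio q σ s := (hHset j).mp hj1
    have h5 := hprioH j hjH
    unfold prioLt at hj2
    omega

end SchoolChoice
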